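/- Let k ≤ n be positive integers. Then I_{n,k} ⊆ T(Y_{n,k}). -/

import Mathlib

open MvPolynomial Finset

/-- The ideal `I_{n,k} ⊆ ℚ[x_1, …, x_n]` generated by `x_1^k, …, x_n^k` together with
the elementary symmetric polynomials `e_d(x_1, …, x_n)` for `n−k+1 ≤ d ≤ n`. -/
noncomputable def Ink (n k : ℕ) : Ideal (MvPolynomial (Fin n) ℚ) :=
  Ideal.span ({p | ∃ i : Fin n, p = X i ^ k} ∪
    {p | ∃ d : ℕ, n - k + 1 ≤ d ∧ d ≤ n ∧ p = esymm (Fin n) ℚ d})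

/-- `T(Y_{n,k})`: the ideal generated by top-degree homogeneous components `τ(f)` of the
nonzero polynomials `f` vanishing on the set `Y_{n,k}` of points `y ∈ ℚ^n` whose set of
coordinates is exactly `{α_1, …, α_k}`. -/
noncomputable def topIdeal (n k : ℕ) (α : Fin k → ℚ) : Ideal (MvPolynomial (Fin n) ℚ) :=
  Ideal.span {g | ∃ f : MvPolynomial (Fin n) ℚ, f ≠ 0 ∧
    (∀ y : Fin n → ℚ, Set.range y = Set.range α → eval y f = 0) ∧
    g = homogeneousComponent f.totalDegree f}

/-- If `f = g + h` with `h` homogeneous of degree `D`, nonzero, and `g` of smaller total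
degree, then `h` is the top homogeneous component of `f` and belongs to `topIdeal`. -/
lemma top_component_eq {n D : ℕ} (g h : MvPolynomial (Fin n) ℚ)
    (hh : h.IsHomogeneous D) (hne : h ≠ 0) (hg : g.totalDegree < D) :
    (g + h) ≠ 0 ∧ (g + h).totalDegree = D ∧
      homogeneousComponent (g + h).totalDegree (g + h) = h := by
  have hcomp : homogeneousComponent D (g + h) = h := by
    rw [map_add, homogeneousComponent_eq_zero D g hg, zero_add,
      homogeneousComponent_of_mem ((mem_homogeneousSubmodule _ _).2 hh), if_pos rfl]
  have h1 : (g + h).totalDegree ≤ D :=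
    (totalDegree_add _ _).trans (max_le hg.le hh.totalDegree_le)
  have h2 : D ≤ (g + h).totalDegree := by
    by_contra hlt
    exact hne (hcomp ▸ homogeneousComponent_eq_zero D (g+h) (not_le.mp hlt))
  have hEq : (g + h).totalDegree = D := le_antisymm h1 h2
  refine ⟨?_, hEq, by rw [hEq]; exact hcomp⟩
  intro h0
  rw [h0, map_zero] at hcomp
  exact hne hcomp.symm

lemma esymm_hom (n d : ℕ) : (esymm (Fin n) ℚ d).IsHomogeneous d := by
  apply IsHomogeneous.sum
  intro t ht
  have h := IsHomogeneous.prod t (fun i => (X i : MvPolynomial (Fin n) ℚ)) (fun _ => 1)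
    (fun i _ => isHomogeneous_X _ i)
  simpa [Finset.sum_const, (Finset.mem_powersetCard.1 ht).2] using h

lemma esymm_nz (n d : ℕ) (hd : d ≤ n) : esymm (Fin n) ℚ d ≠ 0 := by
  intro h0
  have h1 := congrArg (eval (fun _ : Fin n => (1 : ℚ))) h0
  rw [esymm] at h1
  simp only [eval_sum, eval_prod, eval_X, Finset.prod_const_one, Finset.sum_const,
    nsmul_eq_mul, mul_one, map_zero] at h1
  rw [Finset.card_powersetCard, Finset.card_univ, Fintype.card_fin] at h1
  exact absurd h1 (by exact_mod_cast (Nat.choose_pos hd).ne')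

lemma vieta (n : ℕ) (r : ℚ) :
    (∏ i : Fin n, (C r - X i) : MvPolynomial (Fin n) ℚ) =
      ∑ d ∈ range (n + 1), C ((-1) ^ d * r ^ (n - d)) * esymm (Fin n) ℚ d := by
  have h1 : (∏ i : Fin n, (C r - X i) : MvPolynomial (Fin n) ℚ)
      = ∏ i : Fin n, (-X i + C r) := by
    apply Finset.prod_congr rfl; intros; ring
  rw [h1, Finset.prod_add]
  rw [Finset.powerset_card_disjiUnion]
  erw [Finset.sum_disjiUnion]
  rw [Finset.card_univ, Fintype.card_fin]
  refine Finset.sum_congr rfl fun d hd => ?_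
  rw [esymm, Finset.mul_sum]
  refine Finset.sum_congr rfl fun t ht => ?_
  obtain ⟨hts, htc⟩ := Finset.mem_powersetCard.1 ht
  have hc1 : (∏ i ∈ t, (-X i) : MvPolynomial (Fin n) ℚ) = C ((-1) ^ d) * ∏ i ∈ t, X i := by
    rw [show (fun i => (-X i : MvPolynomial (Fin n) ℚ)) = fun i => (-1) * X i by
      funext i; ring]
    rw [Finset.prod_mul_distrib, Finset.prod_const, htc]
    rw [map_pow, map_neg, map_one]
  have hc2 : (∏ _i ∈ univ \ t, (C r : MvPolynomial (Fin n) ℚ)) = C (r ^ (n - d)) := by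
    rw [Finset.prod_const, Finset.card_sdiff_of_subset hts, Finset.card_univ, Fintype.card_fin, htc,
      ← map_pow]
  rw [hc1, hc2, map_mul]
  ring

lemma vandermonde_solve {k : ℕ} (α : Fin k → ℚ) (hα : Function.Injective α) (v : Fin k → ℚ) :
    ∃ c : Fin k → ℚ, ∀ e : Fin k, ∑ j, c j * α j ^ (e : ℕ) = v e := by
  set M : Matrix (Fin k) (Fin k) ℚ := Matrix.transpose (Matrix.vandermonde α) with hM
  have hdet : M.det ≠ 0 := by
    rw [hM, Matrix.det_transpose]
    exact Matrix.det_vandermonde_ne_zero_iff.2 hα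
  refine ⟨M⁻¹.mulVec v, fun e => ?_⟩
  have h1 : M.mulVec (M⁻¹.mulVec v) = v := by
    rw [Matrix.mulVec_mulVec, Matrix.mul_nonsing_inv _ (isUnit_iff_ne_zero.2 hdet),
      Matrix.one_mulVec]
  have h2 := congrFun h1 e
  rw [Matrix.mulVec, dotProduct] at h2
  simpa [hM, Matrix.vandermonde, Matrix.transpose_apply, mul_comm] using h2

theorem stmt7 (n k : ℕ) (hk : 1 ≤ k) (hkn : k ≤ n)
    (α : Fin k → ℚ) (hα : Function.Injective α) :
    Ink n k ≤ topIdeal n k α := by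
  have hmem : ∀ (D : ℕ) (g h : MvPolynomial (Fin n) ℚ),
      h.IsHomogeneous D → h ≠ 0 → g.totalDegree < D →
      (∀ y : Fin n → ℚ, Set.range y = Set.range α → eval y (g + h) = 0) →
      h ∈ topIdeal n k α := by
    intro D g h hh hne hg hvan
    obtain ⟨h0, _h1, h2⟩ := top_component_eq g h hh hne hg
    exact Ideal.subset_span ⟨g + h, h0, hvan, h2.symm⟩
  rw [Ink, Ideal.span_le]
  rintro p (⟨i, rfl⟩ | ⟨d, hd1, hd2, rfl⟩)
  · -- case X i ^ k
    set g : MvPolynomial (Fin n) ℚ :=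
      ∑ t ∈ (univ : Finset (Fin k)).powerset.erase univ,
        (X i : MvPolynomial (Fin n) ℚ) ^ #t * ∏ j ∈ univ \ t, (-C (α j)) with hg
    have hexp : (∏ j : Fin k, ((X i : MvPolynomial (Fin n) ℚ) - C (α j)))
        = g + X i ^ k := by
      have h1 : (∏ j : Fin k, ((X i : MvPolynomial (Fin n) ℚ) - C (α j)))
          = ∏ j : Fin k, ((X i : MvPolynomial (Fin n) ℚ) + (-C (α j))) := by
        apply Finset.prod_congr rfl; intros; ring
      rw [h1, Finset.prod_add]
      rw [← Finset.sum_erase_add _ _ (Finset.mem_powerset_self (univ : Finset (Fin k)))]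
      congr 1
      · rw [hg]
        refine Finset.sum_congr rfl fun t _ => ?_
        rw [Finset.prod_const]
      · rw [Finset.sdiff_self, Finset.prod_empty, mul_one, Finset.prod_const,
          Finset.card_univ, Fintype.card_fin]
    have hgdeg : g.totalDegree < k := by
      rw [hg]
      apply lt_of_le_of_lt (totalDegree_finset_sum _ _)
      rw [Finset.sup_lt_iff (by exact_mod_cast hk)]
      intro t ht
      obtain ⟨htne, hts⟩ := Finset.mem_erase.1 ht
      have hcard : #t < k := by
        have := Finset.card_lt_card (lt_of_le_of_ne (Finset.mem_powerset.1 hts)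
          htne)
        simpa using this
      calc ((X i : MvPolynomial (Fin n) ℚ) ^ #t * ∏ j ∈ univ \ t, (-C (α j))).totalDegree
          ≤ ((X i : MvPolynomial (Fin n) ℚ) ^ #t).totalDegree
            + (∏ j ∈ univ \ t, (-C (α j) : MvPolynomial (Fin n) ℚ)).totalDegree :=
            totalDegree_mul _ _
        _ ≤ #t + 0 := by
            apply add_le_add
            · exact (totalDegree_X_pow _ _).le
            · have : (∏ j ∈ univ \ t, (-C (α j) : MvPolynomial (Fin n) ℚ))
                  = C (∏ j ∈ univ \ t, (-(α j))) := by
                rw [map_prod]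
                refine Finset.prod_congr rfl fun j _ => ?_
                rw [map_neg]
              rw [this, totalDegree_C]
        _ < k := by simpa using hcard
    refine hmem k g (X i ^ k) (by simpa using (isHomogeneous_X ℚ i).pow k)
      (pow_ne_zero _ (MvPolynomial.X_ne_zero i)) hgdeg ?_
    intro y hy
    rw [← hexp, eval_prod]
    have hyi : y i ∈ Set.range α := by
      rw [← hy]; exact Set.mem_range_self i
    obtain ⟨j0, hj0⟩ := hyi
    refine Finset.prod_eq_zero (Finset.mem_univ j0) ?_
    simp [hj0]
  · -- case esymm d
    have hd0 : 1 ≤ d := le_trans (by omega) hd1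
    have hmlt : n - d < k := by omega
    obtain ⟨c, hc⟩ := vandermonde_solve α hα (fun e => if (e : ℕ) = n - d then 1 else 0)
    set b : ℕ → ℚ := fun d' => (-1) ^ d' * ∑ j, c j * α j ^ (n - d') with hb
    set f : MvPolynomial (Fin n) ℚ :=
      ∑ j, C (c j) * ∏ i : Fin n, (C (α j) - X i) with hf
    have hexp : f = ∑ d' ∈ range (n + 1), C (b d') * esymm (Fin n) ℚ d' := by
      rw [hf]
      simp_rw [vieta, Finset.mul_sum]
      rw [Finset.sum_comm]
      refine Finset.sum_congr rfl fun d' _ => ?_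
      show (∑ j, C (c j) * (C ((-1 : ℚ) ^ d' * α j ^ (n - d')) * esymm (Fin n) ℚ d'))
        = C ((-1 : ℚ) ^ d' * ∑ j, c j * α j ^ (n - d')) * esymm (Fin n) ℚ d'
      have : ((-1 : ℚ) ^ d' * ∑ j, c j * α j ^ (n - d'))
          = ∑ j, c j * ((-1 : ℚ) ^ d' * α j ^ (n - d')) := by
        rw [Finset.mul_sum]
        refine Finset.sum_congr rfl fun j _ => by ring
      rw [this, map_sum, Finset.sum_mul]
      refine Finset.sum_congr rfl fun j _ => ?_
      rw [← mul_assoc, ← map_mul]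
    have hsplit : f = (∑ d' ∈ Finset.Ico 0 (n - k + 1), C (b d') * esymm (Fin n) ℚ d')
        + C ((-1 : ℚ) ^ d) * esymm (Fin n) ℚ d := by
      rw [hexp, range_eq_Ico,
        ← Finset.sum_Ico_consecutive _ (Nat.zero_le (n - k + 1)) (by omega)]
      congr 1
      rw [Finset.sum_eq_single_of_mem d (Finset.mem_Ico.2 ⟨hd1, by omega⟩)]
      · congr 2
        show (-1 : ℚ) ^ d * ∑ j, c j * α j ^ (n - d) = (-1 : ℚ) ^ d
        have h1 := hc ⟨n - d, hmlt⟩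
        norm_num at h1
        rw [h1, mul_one]
      · intro d' hd' hne
        obtain ⟨hd'1, hd'2⟩ := Finset.mem_Ico.1 hd'
        have hm' : n - d' < k := by omega
        have h1 := hc ⟨n - d', hm'⟩
        have hnd : n - d' ≠ n - d := by omega
        simp only [Fin.val_mk] at h1
        rw [if_neg hnd] at h1
        show C ((-1 : ℚ) ^ d' * ∑ j, c j * α j ^ (n - d')) * esymm (Fin n) ℚ d' = 0
        rw [show (∑ j, c j * α j ^ (n - d')) = 0 from h1, mul_zero, map_zero, zero_mul]
    have hgdeg : (∑ d' ∈ Finset.Ico 0 (n - k + 1),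
        C (b d') * esymm (Fin n) ℚ d').totalDegree < d := by
      apply lt_of_le_of_lt (totalDegree_finset_sum _ _)
      rw [Finset.sup_lt_iff (by exact_mod_cast hd0)]
      intro d' hd'
      obtain ⟨_, hd'2⟩ := Finset.mem_Ico.1 hd'
      calc (C (b d') * esymm (Fin n) ℚ d').totalDegree
          ≤ (C (b d') : MvPolynomial (Fin n) ℚ).totalDegree
            + (esymm (Fin n) ℚ d').totalDegree := totalDegree_mul _ _
        _ ≤ 0 + d' := add_le_add (totalDegree_C _).le (esymm_hom n d').totalDegree_le
        _ < d := by omega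
    have hhom : (C ((-1 : ℚ) ^ d) * esymm (Fin n) ℚ d).IsHomogeneous d :=
      (esymm_hom n d).C_mul _
    have hnz : (C ((-1 : ℚ) ^ d) * esymm (Fin n) ℚ d) ≠ 0 := by
      apply mul_ne_zero _ (esymm_nz n d hd2)
      simp
    have hvan : ∀ y : Fin n → ℚ, Set.range y = Set.range α →
        eval y ((∑ d' ∈ Finset.Ico 0 (n - k + 1), C (b d') * esymm (Fin n) ℚ d')
          + C ((-1 : ℚ) ^ d) * esymm (Fin n) ℚ d) = 0 := by
      intro y hy
      rw [← hsplit, hf, eval_sum]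
      refine Finset.sum_eq_zero fun j _ => ?_
      rw [eval_mul, eval_prod]
      have hj : α j ∈ Set.range y := by rw [hy]; exact Set.mem_range_self j
      obtain ⟨i0, hi0⟩ := hj
      have : eval y (C (α j) - X i0 : MvPolynomial (Fin n) ℚ) = 0 := by
        simp [hi0]
      rw [Finset.prod_eq_zero (Finset.mem_univ i0) this, mul_zero]
    have hmem' := hmem d _ _ hhom hnz hgdeg hvan
    have hfin : esymm (Fin n) ℚ d
        = C ((-1 : ℚ) ^ d) * (C ((-1 : ℚ) ^ d) * esymm (Fin n) ℚ d) := by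
      rw [← mul_assoc, ← map_mul, ← pow_add, Even.neg_one_pow ⟨d, rfl⟩, map_one, one_mul]
    rw [hfin]
    exact Ideal.mul_mem_left _ _ hmem'
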